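/- Let μ(·|s) and Q be given, and define π*(a|s) ∝ μ(a|s)·exp(Q(s,a)). Let μ_t(a_t|s) = ∫ N(a_t | α_t a, σ_t² I) μ(a|s) da and π*_t(a_t|s) = ∫ N(a_t | α_t a, σ_t² I) π*(a|s) da be their diffused marginals at time t. Then π*_t(a_t|s) ∝ μ_t(a_t|s) · exp(Q_t(s, a_t, t)), where Q_t(s, a_t, t) := log E_{a ∼ μ_t(·|a_t, s, t)}[ exp(Q(s,a)) ] and μ_t(a|a_t,s,t) = μ(a|s) N(a_t|α_t a, σ_t² I)/μ_t(a_t|s) is the posterior. -/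

import Mathlib

open MeasureTheory Real

/-- Isotropic Gaussian density `N(x | m, σ² I)` on `ℝ^d`. -/
noncomputable def gaussDensity (d : ℕ) (σ : ℝ) (m x : EuclideanSpace ℝ (Fin d)) : ℝ :=
  (2 * Real.pi * σ ^ 2) ^ (-(d : ℝ) / 2) * Real.exp (-‖x - m‖ ^ 2 / (2 * σ ^ 2))

/-- Lemma 3 of the paper: with `π*(a) ∝ μ(a) e^{Q(a)}` and `μ_t, π*_t` the
Gaussian-diffused marginals of `μ, π*` at time `t`, one has
`π*_t(a_t) ∝ μ_t(a_t) · exp(Q_t(a_t))`, where `Q_t(a_t) = log E_{posterior}[e^{Q(a)}]`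
and the posterior is `μ_t(a | a_t) = μ(a) N(a_t | α_t a, σ_t² I) / μ_t(a_t)`. -/
theorem diffused_tilted_marginal_is_tilted_diffused (d : ℕ)
    (μ Q : EuclideanSpace ℝ (Fin d) → ℝ)
    (hμmeas : Measurable μ) (hμpos : ∀ a, 0 < μ a) (hμprob : ∫ a, μ a = 1)
    (hQmeas : Measurable Q) (hQbdd : ∃ M, ∀ a, |Q a| ≤ M)
    (αt σt : ℝ) (hαt : 0 < αt) (hσt : 0 < σt)
    (Z : ℝ) (hZ : Z = ∫ a, μ a * Real.exp (Q a))
    (hZint : Integrable (fun a => μ a * Real.exp (Q a)))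
    (pistar : EuclideanSpace ℝ (Fin d) → ℝ)
    (hpistar : ∀ a, pistar a = μ a * Real.exp (Q a) / Z)
    (μt pit : EuclideanSpace ℝ (Fin d) → ℝ)
    (hμt : ∀ x, μt x = ∫ a, gaussDensity d σt (αt • a) x * μ a)
    (hpit : ∀ x, pit x = ∫ a, gaussDensity d σt (αt • a) x * pistar a)
    (hμtpos : ∀ x, 0 < μt x)
    (post : EuclideanSpace ℝ (Fin d) → EuclideanSpace ℝ (Fin d) → ℝ)
    (hpost : ∀ x a, post x a = μ a * gaussDensity d σt (αt • a) x / μt x)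
    (Qt : EuclideanSpace ℝ (Fin d) → ℝ)
    (hQt : ∀ x, Qt x = Real.log (∫ a, post x a * Real.exp (Q a))) :
    ∃ c : ℝ, 0 < c ∧ ∀ x, pit x = c * (μt x * Real.exp (Qt x)) := by
  obtain ⟨M, hM⟩ := hQbdd
  have hμint : Integrable μ := by
    by_contra h
    rw [integral_undef h] at hμprob
    exact one_ne_zero hμprob.symm
  -- positivity of Z
  have hZpos : 0 < Z := by
    rw [hZ]
    rw [integral_pos_iff_support_of_nonneg
      (fun a => le_of_lt (mul_pos (hμpos a) (Real.exp_pos _))) hZint]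
    have : Function.support (fun a => μ a * Real.exp (Q a)) = Set.univ := by
      ext a
      simp only [Function.mem_support, Set.mem_univ, iff_true]
      exact ne_of_gt (mul_pos (hμpos a) (Real.exp_pos _))
    rw [this]
    exact isOpen_univ.measure_pos volume Set.univ_nonempty
  -- continuity / measurability of gaussian in a
  have hgcont : ∀ x : EuclideanSpace ℝ (Fin d),
      Continuous fun a => gaussDensity d σt (αt • a) x := by
    intro x
    unfold gaussDensity
    fun_prop
  have hgnonneg : ∀ x a, 0 < gaussDensity d σt (αt • a) x := by
    intro x a
    unfold gaussDensity
    exact mul_pos (Real.rpow_pos_of_pos (by positivity) _) (Real.exp_pos _)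
  have hgbdd : ∀ x a, gaussDensity d σt (αt • a) x ≤ (2 * Real.pi * σt ^ 2) ^ (-(d:ℝ)/2) := by
    intro x a
    unfold gaussDensity
    have h1 : Real.exp (-‖x - αt • a‖ ^ 2 / (2 * σt ^ 2)) ≤ 1 := by
      apply Real.exp_le_one_iff.mpr
      apply div_nonpos_of_nonpos_of_nonneg
      · simpa using sq_nonneg ‖x - αt • a‖
      · positivity
    calc (2 * Real.pi * σt ^ 2) ^ (-(d:ℝ)/2) * Real.exp (-‖x - αt • a‖ ^ 2 / (2 * σt ^ 2))
        ≤ (2 * Real.pi * σt ^ 2) ^ (-(d:ℝ)/2) * 1 := by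
          apply mul_le_mul_of_nonneg_left h1 (le_of_lt (Real.rpow_pos_of_pos (by positivity) _))
      _ = _ := mul_one _
  -- integrability of the key integrand
  have hIint : ∀ x, Integrable
      (fun a => μ a * gaussDensity d σt (αt • a) x * Real.exp (Q a)) := by
    intro x
    have heq : (fun a => μ a * gaussDensity d σt (αt • a) x * Real.exp (Q a))
        = fun a => (gaussDensity d σt (αt • a) x * Real.exp (Q a)) * μ a := by
      funext a; ring
    rw [heq]
    apply hμint.bdd_mul (c := (2 * Real.pi * σt ^ 2) ^ (-(d:ℝ)/2) * Real.exp M)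
    · exact ((hgcont x).measurable.mul (Real.measurable_exp.comp hQmeas)).aestronglyMeasurable
    · refine Filter.Eventually.of_forall (fun a => ?_)
      rw [Real.norm_eq_abs, abs_of_nonneg
        (mul_nonneg (le_of_lt (hgnonneg x a)) (le_of_lt (Real.exp_pos _)))]
      apply mul_le_mul (hgbdd x a) (Real.exp_le_exp.mpr ((abs_le.mp (hM a)).2))
        (le_of_lt (Real.exp_pos _)) (le_of_lt (Real.rpow_pos_of_pos (by positivity) _))
  -- positivity of the key integral
  set I : EuclideanSpace ℝ (Fin d) → ℝ :=
    fun x => ∫ a, μ a * gaussDensity d σt (αt • a) x * Real.exp (Q a) with hI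
  have hIpos : ∀ x, 0 < I x := by
    intro x
    rw [hI]
    rw [integral_pos_iff_support_of_nonneg
      (fun a => le_of_lt (mul_pos (mul_pos (hμpos a) (hgnonneg x a)) (Real.exp_pos _)))
      (hIint x)]
    have : Function.support (fun a => μ a * gaussDensity d σt (αt • a) x * Real.exp (Q a))
        = Set.univ := by
      ext a
      simp only [Function.mem_support, Set.mem_univ, iff_true]
      exact ne_of_gt (mul_pos (mul_pos (hμpos a) (hgnonneg x a)) (Real.exp_pos _))
    rw [this]
    exact isOpen_univ.measure_pos volume Set.univ_nonempty
  -- Qt x = log (I x / μt x)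
  have hQt' : ∀ x, Real.exp (Qt x) = I x / μt x := by
    intro x
    have h1 : (fun a => post x a * Real.exp (Q a))
        = fun a => (μ a * gaussDensity d σt (αt • a) x * Real.exp (Q a)) / μt x := by
      funext a; rw [hpost]; ring
    rw [hQt, h1, integral_div]
    rw [show (∫ a, μ a * gaussDensity d σt (αt • a) x * Real.exp (Q a)) = I x from rfl]
    exact Real.exp_log (div_pos (hIpos x) (hμtpos x))
  -- pit x = I x / Z
  have hpit' : ∀ x, pit x = I x / Z := by
    intro x
    have h1 : (fun a => gaussDensity d σt (αt • a) x * pistar a)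
        = fun a => (μ a * gaussDensity d σt (αt • a) x * Real.exp (Q a)) / Z := by
      funext a; rw [hpistar]; ring
    rw [hpit, h1, integral_div]
  refine ⟨Z⁻¹, inv_pos.mpr hZpos, fun x => ?_⟩
  rw [hpit' x, hQt' x]
  have h2 := (hμtpos x).ne'
  field_simp
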